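/- Let A be a matrix over a field with at most q−1 distinct values of non-zero entries, and let d be the number of distinct non-zero rows of A. Then rank(A) ≤ d ≤ q^{rank(A)} − 1. -/

import Mathlib

theorem stmt0 {m n F : Type*} [Fintype m] [Fintype n] [Field F] [DecidableEq F]
    (A : Matrix m n F) (q : ℕ)
    (hq : ((Finset.univ.image fun p : m × n => A p.1 p.2).filter (· ≠ 0)).card ≤ q - 1) :
    A.rank ≤ ((Finset.univ.image fun i : m => A i).filter (· ≠ 0)).card ∧
      ((Finset.univ.image fun i : m => A i).filter (· ≠ 0)).card ≤ q ^ A.rank - 1 := by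
  classical
  set E : Finset F := (Finset.univ.image fun p : m × n => A p.1 p.2).filter (· ≠ 0) with hE
  set D : Finset (n → F) := (Finset.univ.image fun i : m => A i).filter (· ≠ 0) with hD
  -- every entry is either 0 or in E
  have hentry : ∀ i j, A i j = 0 ∨ A i j ∈ E := by
    intro i j
    by_cases h : A i j = 0
    · exact Or.inl h
    · exact Or.inr (by
        simp only [hE, Finset.mem_filter, Finset.mem_image]
        exact ⟨⟨(i, j), Finset.mem_univ _, rfl⟩, h⟩)
  -- Part 1 : rank ≤ D.card
  have hspan : Submodule.span F (Set.range A) = Submodule.span F (D : Set (n → F)) := by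
    apply le_antisymm
    · rw [Submodule.span_le]
      rintro _ ⟨i, rfl⟩
      by_cases h : A i = 0
      · rw [h]; exact Submodule.zero_mem _
      · exact Submodule.subset_span (by
          simp only [hD, Finset.coe_filter, Set.mem_setOf_eq, Finset.mem_image]
          exact ⟨⟨i, Finset.mem_univ _, rfl⟩, h⟩)
    · rw [Submodule.span_le]
      intro u hu
      simp only [hD, Finset.coe_filter, Set.mem_setOf_eq, Finset.mem_image] at hu
      obtain ⟨⟨i, -, rfl⟩, -⟩ := hu
      exact Submodule.subset_span ⟨i, rfl⟩
  have h1 : A.rank ≤ D.card := by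
    have := Matrix.rank_eq_finrank_span_cols A.transpose
    rw [Matrix.rank_transpose] at this
    change A.rank = Module.finrank F (Submodule.span F (Set.range A)) at this
    rw [this, hspan]
    exact finrank_span_finset_le_card D
  refine ⟨h1, ?_⟩
  -- Part 2
  rcases Nat.eq_zero_or_pos q with hq0 | hqpos
  · -- q = 0 : all entries are zero
    subst hq0
    simp only [Nat.zero_sub, Nat.le_zero, Finset.card_eq_zero] at hq
    have hA : ∀ i, A i = 0 := by
      intro i
      funext j
      rcases hentry i j with h | h
      · exact h
      · rw [hq] at h; exact absurd h (Finset.notMem_empty _)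
    have : D = ∅ := by
      rw [hD]
      apply Finset.filter_eq_empty_iff.mpr
      intro u hu
      simp only [Finset.mem_image] at hu
      obtain ⟨i, -, rfl⟩ := hu
      simp [hA i]
    simp [this]
  -- q ≥ 1
  obtain ⟨t, hsub, hspanEq, hli⟩ := exists_linearIndependent F (Set.range A.transpose)
  have htfin : t.Finite := (Set.finite_range A.transpose).subset hsub
  haveI : Fintype t := htfin.fintype
  -- card t = rank
  have hcard_t : Fintype.card t = A.rank := by
    have h1 := finrank_span_set_eq_card hli
    rw [hspanEq] at h1
    rw [Matrix.rank_eq_finrank_span_cols]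
    change _ = Module.finrank F (Submodule.span F (Set.range A.transpose))
    rw [h1, Set.toFinset_card]
  -- choice of column indices
  have hjex : ∀ v : t, ∃ j : n, A.transpose j = (v : m → F) := fun v => hsub v.2
  choose jdx hjdx using hjex
  -- determination lemma
  have hdet : ∀ (i i' : m), (∀ v : t, A i (jdx v) = A i' (jdx v)) → A i = A i' := by
    intro i i' h
    set L : ((m → F) →ₗ[F] F) := (LinearMap.proj i : (m → F) →ₗ[F] F) - LinearMap.proj i' with hL
    have hker : Submodule.span F t ≤ LinearMap.ker L := by
      rw [Submodule.span_le]
      intro v hv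
      have hv' : A i (jdx ⟨v, hv⟩) = A i' (jdx ⟨v, hv⟩) := h ⟨v, hv⟩
      have hcol := hjdx ⟨v, hv⟩
      have h1 : v i = A i (jdx ⟨v, hv⟩) := (congrFun hcol i).symm
      have h2 : v i' = A i' (jdx ⟨v, hv⟩) := (congrFun hcol i').symm
      simp only [SetLike.mem_coe, LinearMap.mem_ker, hL, LinearMap.sub_apply,
        LinearMap.proj_apply]
      rw [h1, h2, hv', sub_self]
    funext j
    have hmem : A.transpose j ∈ Submodule.span F t := by
      rw [hspanEq]; exact Submodule.subset_span ⟨j, rfl⟩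
    have := hker hmem
    simp only [LinearMap.mem_ker, hL, LinearMap.sub_apply, LinearMap.proj_apply] at this
    have : A.transpose j i = A.transpose j i' := sub_eq_zero.mp this
    exact this
  have hdet0 : ∀ (i : m), (∀ v : t, A i (jdx v) = 0) → A i = 0 := by
    intro i h
    set L : ((m → F) →ₗ[F] F) := LinearMap.proj i with hL
    have hker : Submodule.span F t ≤ LinearMap.ker L := by
      rw [Submodule.span_le]
      intro v hv
      have hv' : A i (jdx ⟨v, hv⟩) = 0 := h ⟨v, hv⟩
      have hcol := hjdx ⟨v, hv⟩
      have h1 : v i = A i (jdx ⟨v, hv⟩) := (congrFun hcol i).symm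
      simp only [SetLike.mem_coe, LinearMap.mem_ker, hL, LinearMap.proj_apply]
      rw [h1, hv']
    funext j
    have hmem : A.transpose j ∈ Submodule.span F t := by
      rw [hspanEq]; exact Submodule.subset_span ⟨j, rfl⟩
    have := hker hmem
    simp only [LinearMap.mem_ker, hL, LinearMap.proj_apply] at this
    exact this
  -- injection into pi finset
  set E₀ : Finset F := insert (0 : F) E with hE₀
  set T : Finset (t → F) := (Fintype.piFinset fun _ : t => E₀).erase 0 with hT
  have hinj : D.card ≤ T.card := by
    apply Finset.card_le_card_of_injOn (fun u => fun v : t => u (jdx v))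
    · intro u hu
      simp only [hD, Finset.mem_coe, Finset.mem_filter, Finset.mem_image] at hu
      obtain ⟨⟨i, -, rfl⟩, hne⟩ := hu
      simp only [hT, Finset.mem_coe, Finset.mem_erase, Fintype.mem_piFinset]
      constructor
      · intro h0
        exact hne (hdet0 i fun v => congrFun h0 v)
      · intro v
        rcases hentry i (jdx v) with h | h
        · rw [h]; exact Finset.mem_insert_self _ _
        · exact Finset.mem_insert_of_mem h
    · intro u₁ h₁ u₂ h₂ hΦ
      simp only [hD, Finset.coe_filter, Set.mem_setOf_eq, Finset.mem_image] at h₁ h₂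
      obtain ⟨⟨i₁, -, rfl⟩, -⟩ := h₁
      obtain ⟨⟨i₂, -, rfl⟩, -⟩ := h₂
      exact hdet i₁ i₂ fun v => congrFun hΦ v
  have hTcard : T.card = E₀.card ^ A.rank - 1 := by
    have h0mem : (0 : t → F) ∈ Fintype.piFinset fun _ : t => E₀ := by
      simp [Fintype.mem_piFinset, hE₀]
    rw [hT, Finset.card_erase_of_mem h0mem, Fintype.card_piFinset]
    simp [hcard_t]
  have hE₀card : E₀.card ≤ q := by
    calc E₀.card ≤ E.card + 1 := Finset.card_insert_le _ _
    _ ≤ (q - 1) + 1 := by omega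
    _ = q := by omega
  calc D.card ≤ T.card := hinj
    _ = E₀.card ^ A.rank - 1 := hTcard
    _ ≤ q ^ A.rank - 1 := Nat.sub_le_sub_right (Nat.pow_le_pow_left hE₀card _) 1
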